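/- Let P ∈ ℤ[X] be a non-constant polynomial with leading coefficient A, |A| ≥ 2, and let a, b be coprime positive integers such that (a/b)^{P(a/b)} is rational. Then b < 3|A| log₂|A|. -/

import Mathlib

lemma logu {u : ℝ} (hu : 3 ≤ u) : Real.logb 2 u < 2 * u / 3 := by
  have hl2 : (0.6931471803 : ℝ) < Real.log 2 := Real.log_two_gt_d9
  have hl2' : Real.log 2 < 0.6931471808 := Real.log_two_lt_d9
  have h34 : Real.log 3 < Real.log 4 := Real.log_lt_log (by norm_num) (by norm_num)
  have h4 : Real.log 4 = 2 * Real.log 2 := by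
    rw [show (4:ℝ) = 2^2 by norm_num, Real.log_pow]; ring
  have hsplit : Real.log u = Real.log 3 + Real.log (u/3) := by
    rw [← Real.log_mul (by norm_num) (by positivity)]
    congr 1; field_simp
  have hle : Real.log (u/3) ≤ u/3 - 1 := Real.log_le_sub_one_of_pos (by positivity)
  rw [Real.logb, div_lt_iff₀ (by positivity)]
  nlinarith [hsplit, hle, h34, h4, hl2, hu]

lemma analytic {B x : ℝ} (hB : 2 ≤ B) (hx : 2 ≤ x) (h : x ≤ B * Real.logb 2 x) :
    x < 3 * B * Real.logb 2 B := by
  have ht : 1 ≤ Real.logb 2 B := by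
    rw [show (1:ℝ) = Real.logb 2 2 by simp]
    exact Real.logb_le_logb_of_le (by norm_num) (by norm_num) hB
  set t := Real.logb 2 B with htdef
  have hB0 : 0 < B := by linarith
  set u := x / B with hudef
  have hu : 0 < u := by positivity
  have hxBu : x = B * u := by rw [hudef]; field_simp
  have hlog : Real.logb 2 x = t + Real.logb 2 u := by
    rw [hxBu, Real.logb_mul (by positivity) (by positivity)]
  rcases lt_or_ge u 3 with hu3 | hu3
  · nlinarith
  · have := logu hu3
    rw [hlog] at h
    nlinarith
open Polynomial Finset

lemma claim1 (P : Polynomial ℤ) (a b : ℕ) (hb : 0 < b) :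
    ((∑ i ∈ range (P.natDegree + 1), P.coeff i * (a:ℤ)^i * (b:ℤ)^(P.natDegree - i) : ℤ) : ℚ)
      = (Polynomial.aeval ((a:ℚ)/b) P) * (b:ℚ)^P.natDegree := by
  have hb0 : (b:ℚ) ≠ 0 := by positivity
  rw [Polynomial.aeval_eq_sum_range, Finset.sum_mul]
  push_cast
  refine Finset.sum_congr rfl fun i hi => ?_
  rw [Finset.mem_range] at hi
  have hbb : (b:ℚ)^(P.natDegree - i) * (b:ℚ)^i = (b:ℚ)^P.natDegree := by
    rw [← pow_add]; congr 1; omega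
  rw [zsmul_eq_mul]
  rw [div_pow, ← hbb]
  field_simp

lemma dvd_lemma (P : Polynomial ℤ) (hP : 0 < P.natDegree) (a b : ℕ) (ha : 0 < a) (hb : 0 < b)
    (hab : Nat.Coprime a b) :
    b ∣ P.leadingCoeff.natAbs * (Polynomial.aeval ((a:ℚ)/b) P).den := by
  classical
  set d := P.natDegree with hd
  set q : ℚ := Polynomial.aeval ((a:ℚ)/b) P with hq
  set A : ℤ := P.leadingCoeff with hA
  have hA0 : A ≠ 0 := Polynomial.leadingCoeff_ne_zero.mpr (Polynomial.ne_zero_of_natDegree_gt hP)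
  have hAn0 : A.natAbs ≠ 0 := Int.natAbs_ne_zero.mpr hA0
  set N : ℤ := ∑ i ∈ range (d+1), P.coeff i * (a:ℤ)^i * (b:ℤ)^(d-i) with hN
  have hc1 : (N:ℚ) = q * (b:ℚ)^d := claim1 P a b hb
  have hc3 : q.num * (b:ℤ)^d = N * (q.den:ℤ) := by
    have hnum : (q.num : ℚ) = q * q.den := by
      have h := Rat.num_div_den q
      rw [div_eq_iff (by exact_mod_cast q.den_nz : (q.den:ℚ) ≠ 0)] at h
      exact h
    have h2 : (q.num : ℚ) * ((b:ℚ))^d = (N:ℚ) * ((q.den : ℚ)) := by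
      rw [hnum, hc1]; ring
    exact_mod_cast h2
  set M : ℤ := ∑ i ∈ range d, P.coeff i * (a:ℤ)^i * (b:ℤ)^(d-1-i) with hM
  have hNdec : N = A * (a:ℤ)^d + b * M := by
    rw [hN, Finset.sum_range_succ]
    have hterm : ∀ i ∈ range d, P.coeff i * (a:ℤ)^i * (b:ℤ)^(d-i)
        = (b:ℤ) * (P.coeff i * (a:ℤ)^i * (b:ℤ)^(d-1-i)) := by
      intro i hi
      rw [Finset.mem_range] at hi
      have hbp : (b:ℤ)^(d-i) = (b:ℤ) * (b:ℤ)^(d-1-i) := by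
        rw [← pow_succ']; congr 1; omega
      rw [hbp]; ring
    rw [Finset.sum_congr rfl hterm, ← Finset.mul_sum, ← hM, hA, Polynomial.leadingCoeff, ← hd]
    simp
    ring
  rw [← Nat.factorization_le_iff_dvd hb.ne' (mul_ne_zero hAn0 q.den_nz)]
  intro p
  by_cases hpp : p.Prime
  swap
  · simp [Nat.factorization_eq_zero_of_not_prime _ hpp]
  set k := b.factorization p with hk
  rcases Nat.eq_zero_or_pos k with hk0 | hkpos
  · simp [← hk, hk0]
  set v := A.natAbs.factorization p with hv
  rw [Nat.factorization_mul hAn0 q.den_nz, Finsupp.add_apply]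
  rcases le_or_gt k v with hkv | hvk
  · exact le_add_right hkv
  have hpb : p ∣ b := Nat.dvd_of_factorization_pos hkpos.ne'
  have hpa : ¬ p ∣ a := by
    intro hpa
    have : p ∣ Nat.gcd a b := Nat.dvd_gcd hpa hpb
    rw [hab.gcd_eq_one] at this
    exact hpp.one_lt.ne' (Nat.dvd_one.mp this)
  have hpkb : (p:ℤ)^k ∣ (b:ℤ) := by exact_mod_cast Int.natCast_dvd_natCast.mpr (Nat.ordProj_dvd b p)
  have hAv : (p:ℤ)^v ∣ A := by
    have h1 : (p:ℤ)^v ∣ (A.natAbs : ℤ) := by exact_mod_cast Nat.ordProj_dvd A.natAbs p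
    exact Int.dvd_natAbs.mp h1
  have hNv1 : ¬ (p:ℤ)^(v+1) ∣ N := by
    intro hdvd
    have hbM : (p:ℤ)^(v+1) ∣ (b:ℤ) * M :=
      dvd_mul_of_dvd_left ((pow_dvd_pow _ hvk).trans hpkb) _
    have hAa : (p:ℤ)^(v+1) ∣ A * (a:ℤ)^d := by
      have := dvd_sub hdvd hbM
      rw [hNdec] at this
      simpa using this
    have hAan : p^(v+1) ∣ A.natAbs * a^d := by
      have h2 := Int.natAbs_dvd_natAbs.mpr hAa
      simpa [Int.natAbs_mul, Int.natAbs_pow] using h2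
    have hcop : (p^(v+1)).Coprime (a^d) :=
      ((Nat.Prime.coprime_iff_not_dvd hpp).mpr hpa).pow _ _
    have hdA : p^(v+1) ∣ A.natAbs := hcop.dvd_of_dvd_mul_right hAan
    have := (Nat.Prime.pow_dvd_iff_le_factorization hpp hAn0).mp hdA
    omega
  have hN0 : N ≠ 0 := fun h0 => hNv1 (h0 ▸ dvd_zero _)
  have hNn0 : N.natAbs ≠ 0 := Int.natAbs_ne_zero.mpr hN0
  have hNfact : N.natAbs.factorization p = v := by
    have hNv : (p:ℤ)^v ∣ N := by
      rw [hNdec]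
      exact dvd_add (dvd_mul_of_dvd_left hAv _)
        (dvd_mul_of_dvd_left ((pow_dvd_pow _ hvk.le).trans hpkb) _)
    have h1 : v ≤ N.natAbs.factorization p :=
      (Nat.Prime.pow_dvd_iff_le_factorization hpp hNn0).mp
        (by have := Int.natAbs_dvd_natAbs.mpr hNv; simpa [Int.natAbs_pow] using this)
    have h2 : ¬ (v+1 ≤ N.natAbs.factorization p) := by
      intro hle
      exact hNv1 (Int.dvd_natAbs.mp (by
        exact_mod_cast (Nat.Prime.pow_dvd_iff_le_factorization hpp hNn0).mpr hle))
    omega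
  have hnum0 : q.num ≠ 0 := by
    intro h0
    rw [h0, zero_mul] at hc3
    have : N = 0 := by
      rcases mul_eq_zero.mp hc3.symm with h | h
      · exact h
      · exact absurd h (by exact_mod_cast q.den_nz)
    exact hN0 this
  have hnumn0 : q.num.natAbs ≠ 0 := Int.natAbs_ne_zero.mpr hnum0
  have hnat : q.num.natAbs * b^d = N.natAbs * q.den := by
    have h2 := congrArg Int.natAbs hc3
    simpa [Int.natAbs_mul, Int.natAbs_pow] using h2
  have hbd0 : b^d ≠ 0 := pow_ne_zero _ hb.ne'
  have key := congrArg (fun f => f p) (congrArg Nat.factorization hnat)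
  simp only [Nat.factorization_mul hnumn0 hbd0, Nat.factorization_mul hNn0 q.den_nz,
    Nat.factorization_pow, Finsupp.add_apply, Finsupp.smul_apply, smul_eq_mul] at key
  rw [← hk, hNfact] at key
  have hdk : k ≤ d * k := Nat.le_mul_of_pos_left k hP
  omega

lemma pow_den_le {b n : ℕ} (hb : 2 ≤ b) {r0 s : ℚ} (hden : r0.den = b) {m : ℕ}
    (hcop : Nat.Coprime m n) (hs : r0 ^ m = s ^ n) : 2 ^ n ≤ b := by
  have hb0 : b ≠ 0 := by omega
  have hd : b ^ m = s.den ^ n := by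
    have h2 := congrArg Rat.den hs
    simpa [Rat.den_pow, hden] using h2
  set p := b.minFac with hp
  have hpp : p.Prime := Nat.minFac_prime (by omega)
  have hpb : p ∣ b := Nat.minFac_dvd b
  set k := b.factorization p with hk
  have hkpos : 0 < k := hpp.factorization_pos_of_dvd hb0 hpb
  have hfac := congrArg (fun f => f p) (congrArg Nat.factorization hd)
  simp only [Nat.factorization_pow, Finsupp.smul_apply, smul_eq_mul] at hfac
  have hnd : n ∣ k * m := ⟨s.den.factorization p, by rw [mul_comm k m]; rw [← hk] at hfac; linarith [hfac]⟩
  have hnk : n ∣ k := (Nat.Coprime.dvd_of_dvd_mul_right (hcop.symm) hnd)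
  have hnlek : n ≤ k := Nat.le_of_dvd hkpos hnk
  calc 2^n ≤ p^n := Nat.pow_le_pow_left hpp.two_le n
    _ ≤ p^k := Nat.pow_le_pow_right hpp.pos hnlek
    _ ≤ b := Nat.le_of_dvd (by omega) (Nat.ordProj_dvd b p)

lemma exp_bound {q : ℚ} {a b : ℕ} (ha : 0 < a) (hb : 2 ≤ b) (hab : Nat.Coprime a b)
    {s : ℚ} (hs : ((a:ℝ)/b) ^ ((q:ℚ):ℝ) = s) : 2 ^ q.den ≤ b := by
  set r0 : ℚ := (a:ℚ)/b with hr0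
  have hbq : ((b:ℕ):ℚ) ≠ 0 := by positivity
  have hr0den : r0.den = b := by
    have h2 : (((((a:ℤ)):ℚ)/(((b:ℤ)):ℚ)).den : ℤ) = (b:ℤ) :=
      Rat.den_div_eq_of_coprime (by exact_mod_cast (by omega : 0 < b) : (0:ℤ) < (b:ℤ))
        (by simpa using hab)
    have h3 : ((((a:ℤ)):ℚ)/(((b:ℤ)):ℚ)) = r0 := by push_cast; rfl
    rw [h3] at h2
    exact_mod_cast h2
  have hxr : ((a:ℝ)/b) = ((r0 : ℚ) : ℝ) := by push_cast [hr0]; ring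
  have hxpos : (0:ℝ) < ((a:ℝ)/b) := by positivity
  have hmul : (q.num : ℚ) = q * q.den := by
    have h := Rat.num_div_den q
    rw [div_eq_iff (by exact_mod_cast q.den_nz : ((q.den:ℚ)) ≠ 0)] at h
    exact h
  have key : ((s ^ q.den : ℚ) : ℝ) = ((r0 ^ q.num : ℚ) : ℝ) := by
    push_cast
    rw [← hs, ← Real.rpow_natCast (((a:ℝ)/b) ^ ((q:ℚ):ℝ)) q.den, ← Real.rpow_mul hxpos.le,
      show ((q:ℚ):ℝ) * (q.den:ℝ) = ((q.num:ℤ):ℝ) by exact_mod_cast congrArg (fun t : ℚ => (t:ℝ)) hmul.symm,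
      Real.rpow_intCast, hxr]
  have hQ : s ^ q.den = r0 ^ q.num := by exact_mod_cast key
  rcases lt_trichotomy q.num 0 with hneg | h0 | hpos
  · have hEq : r0 ^ ((-q.num).toNat) = (s⁻¹) ^ q.den := by
      rw [← zpow_natCast, Int.toNat_of_nonneg (by omega), zpow_neg, ← hQ, inv_pow]
    have htn : (-q.num).toNat = q.num.natAbs := by omega
    exact pow_den_le hb hr0den (htn ▸ q.reduced) hEq
  · have hq0 : q = 0 := Rat.num_eq_zero.mp h0
    simpa [hq0] using hb
  · have hEq : r0 ^ (q.num.toNat) = s ^ q.den := by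
      rw [← zpow_natCast, Int.toNat_of_nonneg (by omega)]; exact hQ.symm
    have htn : q.num.toNat = q.num.natAbs := by omega
    exact pow_den_le hb hr0den (htn ▸ q.reduced) hEq

theorem stmt_13 (P : Polynomial ℤ) (hP : 0 < P.natDegree) (hA : 2 ≤ |P.leadingCoeff|)
    (a b : ℕ) (ha : 0 < a) (hb : 0 < b) (hab : Nat.Coprime a b)
    (h : ∃ q : ℚ, ((a : ℝ) / b) ^ ((Polynomial.aeval ((a : ℚ) / b) P : ℚ) : ℝ) = q) :
    (b : ℝ) < 3 * |(P.leadingCoeff : ℝ)| * Real.logb 2 |(P.leadingCoeff : ℝ)| := by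
  obtain ⟨s, hs⟩ := h
  set q : ℚ := Polynomial.aeval ((a:ℚ)/b) P with hq
  have hAabs : |(P.leadingCoeff : ℝ)| = (P.leadingCoeff.natAbs : ℝ) := by
    rw [Nat.cast_natAbs, Int.cast_abs]
  have hAR : (2:ℝ) ≤ |(P.leadingCoeff:ℝ)| := by
    rw [← Int.cast_abs]; exact_mod_cast hA
  have ht : 1 ≤ Real.logb 2 |(P.leadingCoeff:ℝ)| := by
    rw [show (1:ℝ) = Real.logb 2 2 by simp]
    exact Real.logb_le_logb_of_le (by norm_num) (by norm_num) hAR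
  rcases eq_or_lt_of_le (Nat.succ_le_of_lt hb) with hb1 | hb2
  · rw [← hb1]
    push_cast
    nlinarith
  · have hdvd := dvd_lemma P hP a b ha hb hab
    have hble : b ≤ P.leadingCoeff.natAbs * q.den := by
      refine Nat.le_of_dvd ?_ hdvd
      have : P.leadingCoeff.natAbs ≠ 0 := Int.natAbs_ne_zero.mpr
        (Polynomial.leadingCoeff_ne_zero.mpr (Polynomial.ne_zero_of_natDegree_gt hP))
      positivity
    have hexp : 2 ^ q.den ≤ b := exp_bound ha hb2 hab hs
    have hdenlog : (q.den : ℝ) ≤ Real.logb 2 b := by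
      have h2 : ((2:ℝ))^(q.den:ℕ) ≤ (b:ℝ) := by exact_mod_cast hexp
      calc (q.den:ℝ) = Real.logb 2 ((2:ℝ)^(q.den:ℕ)) := by
            rw [Real.logb_pow]; simp
        _ ≤ Real.logb 2 b := Real.logb_le_logb_of_le (by norm_num) (by positivity) h2
    have hbB : (b:ℝ) ≤ |(P.leadingCoeff:ℝ)| * Real.logb 2 b := by
      have h1 : (b:ℝ) ≤ (P.leadingCoeff.natAbs : ℝ) * q.den := by exact_mod_cast hble
      have h0 : (0:ℝ) ≤ (P.leadingCoeff.natAbs : ℝ) := by positivity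
      rw [hAabs]
      nlinarith
    exact analytic hAR (by exact_mod_cast hb2) hbB
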